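/- The statement 'for all positive integers n, Φ_n holds' is equivalent to the statement 'for all positive integers n, Ψ_n holds'. -/

import Mathlib

/-- The statement `Φ_n`: for all integers `x_1, …, x_n` there exist integers
`y_1, …, y_n` such that (i) if `2^(2^(n-1)) < |x_1|` then `|x_1| < |y_i|` for some `i`;
(ii) `x_i + x_j = x_k` implies `y_i + y_j = y_k`; (iii) `x_i · x_j = x_k` implies
`y_i · y_j = y_k`. (The first coordinate is the one of index `0`.) -/
def Phi (n : ℕ) : Prop :=
  ∀ x : Fin n → ℤ, ∃ y : Fin n → ℤ,
    (∀ i : Fin n, (i : ℕ) = 0 →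
      (2 : ℤ) ^ 2 ^ (n - 1) < |x i| → ∃ j : Fin n, |x i| < |y j|) ∧
    (∀ i j k : Fin n, x i + x j = x k → y i + y j = y k) ∧
    (∀ i j k : Fin n, x i * x j = x k → y i * y j = y k)

/-- The statement `Ψ_n`: like `Φ_n` but with the strengthened hypothesis
`2^(2^(n-1)) < |x_1| = max(|x_1|, …, |x_n|) ≤ 2^(2^n)` in condition (i). -/
def Psi (n : ℕ) : Prop :=
  ∀ x : Fin n → ℤ, ∃ y : Fin n → ℤ,
    (∀ i : Fin n, (i : ℕ) = 0 →
      ((2 : ℤ) ^ 2 ^ (n - 1) < |x i| ∧ (∀ j : Fin n, |x j| ≤ |x i|) ∧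
        |x i| ≤ (2 : ℤ) ^ 2 ^ n) →
      ∃ j : Fin n, |x i| < |y j|) ∧
    (∀ i j k : Fin n, x i + x j = x k → y i + y j = y k) ∧
    (∀ i j k : Fin n, x i * x j = x k → y i * y j = y k)

set_option maxHeartbeats 1000000 in
/-- `Φ_n` holds for all positive integers `n` if and only if `Ψ_n` holds for all
positive integers `n`. -/
theorem phi_forall_iff_psi_forall :
    (∀ n : ℕ, 0 < n → Phi n) ↔ (∀ n : ℕ, 0 < n → Psi n) := by
  constructor
  · intro h n hn x
    obtain ⟨y, h1, h2, h3⟩ := h n hn x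
    exact ⟨y, fun i hi hh => h1 i hi hh.1, h2, h3⟩
  · intro h n hn x
    by_cases hbig : (2:ℤ) ^ 2 ^ (n-1) < |x ⟨0, hn⟩|
    · haveI : Nonempty (Fin n) := Fin.pos_iff_nonempty.mp hn
      obtain ⟨i0, hMx⟩ := Finite.exists_max (fun i : Fin n => |x i|)
      set M := |x i0| with hMdef
      have hM1 : (2:ℤ) ^ 2 ^ (n-1) < M := lt_of_lt_of_le hbig (hMx _)
      have h2le : (2:ℤ) ≤ 2 ^ 2 ^ (n-1) :=
        le_self_pow₀ one_le_two (by positivity)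
      have hM2 : (2:ℤ) < M := h2le.trans_lt hM1
      have hMpos : (0:ℤ) < M := by linarith
      have hex : ∃ t, M ≤ 2 ^ 2 ^ t := by
        refine ⟨M.natAbs, ?_⟩
        have h1 : (M.natAbs : ℤ) = M := Int.natAbs_of_nonneg (abs_nonneg _)
        have h2 : M.natAbs < 2 ^ 2 ^ M.natAbs :=
          lt_of_lt_of_le (Nat.lt_two_pow_self)
            (Nat.pow_le_pow_right (by norm_num) (Nat.le_of_lt (Nat.lt_two_pow_self)))
        calc M = (M.natAbs : ℤ) := h1.symm
          _ ≤ ((2 ^ 2 ^ M.natAbs : ℕ) : ℤ) := by exact_mod_cast h2.le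
          _ = 2 ^ 2 ^ M.natAbs := by push_cast; ring
      classical
      obtain ⟨t, htspec, htn, hMt⟩ :
          ∃ t, M ≤ 2 ^ 2 ^ t ∧ n ≤ t ∧ (2:ℤ) ^ 2 ^ (t-1) < M := by
        refine ⟨Nat.find hex, Nat.find_spec hex, ?_, ?_⟩
        · by_contra hc
          push_neg at hc
          have hle : Nat.find hex ≤ n - 1 := by omega
          have : (2:ℤ) ^ 2 ^ Nat.find hex ≤ 2 ^ 2 ^ (n-1) :=
            pow_le_pow_right₀ one_le_two (Nat.pow_le_pow_right (by norm_num) hle)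
          have := Nat.find_spec hex
          linarith
        · have hpos : 0 < Nat.find hex := by
            rcases Nat.eq_zero_or_pos (Nat.find hex) with h0 | hpos
            · exfalso
              have hs := Nat.find_spec hex
              rw [h0] at hs
              norm_num at hs
              linarith
            · exact hpos
          have := Nat.find_min hex (show Nat.find hex - 1 < Nat.find hex by omega)
          push_neg at this
          exact this
      have ht1 : 1 ≤ t := le_trans hn htn
      -- the extended tuple
      set x' : Fin (t+1) → ℤ := fun j =>
        if hj : 1 ≤ (j:ℕ) ∧ (j:ℕ) ≤ n then x ⟨(j:ℕ)-1, by omega⟩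
        else if (j:ℕ) = 0 then M^2 else 0 with hx'def
      have hlt : ∀ i : Fin n, (i:ℕ)+1 < t+1 := fun i => by
        have := i.isLt; omega
      set e : Fin n → Fin (t+1) := fun i => ⟨(i:ℕ)+1, hlt i⟩ with hedef
      have hxe : ∀ i : Fin n, x' (e i) = x i := by
        intro i
        have hi := i.isLt
        rw [hx'def]
        simp only [hedef]
        rw [dif_pos ⟨by omega, by omega⟩]
        exact congrArg x (Fin.ext (by simp))
      have hx0 : x' ⟨0, by omega⟩ = M^2 := by
        rw [hx'def]
        norm_num
      obtain ⟨y', hy1, hy2, hy3⟩ := h (t+1) (by omega) x'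
      clear_value x' e
      clear h hbig
      refine ⟨fun i => y' (e i), ?_, ?_, ?_⟩
      · intro i hi hlti
        have hxiM : |x i| ≤ M := hMx i
        have habs0 : |x' ⟨0, by omega⟩| = M^2 := by
          rw [hx0]; exact abs_of_nonneg (by positivity)
        have hMM2 : M < M^2 := by
          rw [sq]
          exact (lt_mul_iff_one_lt_left hMpos).mpr (by linarith)
        have hconds : (2:ℤ) ^ 2 ^ (t + 1 - 1) < |x' ⟨0, by omega⟩| ∧
            (∀ j : Fin (t+1), |x' j| ≤ |x' ⟨0, by omega⟩|) ∧
            |x' ⟨0, by omega⟩| ≤ (2:ℤ) ^ 2 ^ (t + 1) := ?_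
        · obtain ⟨j', hj'⟩ := hy1 ⟨0, by omega⟩ rfl hconds
          rw [habs0] at hj'
          have hjlt := j'.isLt
          by_cases hj0 : (j':ℕ) = 0
          · have hrel : x' (e i0) * x' (e i0) = x' ⟨0, by omega⟩ := by
              rw [hxe, hx0, hMdef, sq_abs]
              ring
            have hy0 := hy3 _ _ _ hrel
            have hj'eq : j' = ⟨0, by omega⟩ := Fin.ext hj0
            rw [hj'eq, ← hy0, abs_mul] at hj'
            refine ⟨i0, ?_⟩
            have hya : 0 ≤ |y' (e i0)| := abs_nonneg _
            have hlt2 : M < |y' (e i0)| := by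
              by_contra hc
              push_neg at hc
              have hmul := mul_le_mul hc hc hya hMpos.le
              have hsq : M^2 = M * M := sq M
              linarith
            exact lt_of_le_of_lt hxiM hlt2
          · by_cases hjn : (j':ℕ) ≤ n
            · refine ⟨⟨(j':ℕ)-1, by omega⟩, ?_⟩
              have heq : e ⟨(j':ℕ)-1, by omega⟩ = j' := by
                apply Fin.ext
                simp only [hedef]
                omega
              simp only [heq]
              calc |x i| ≤ M := hxiM
                _ < M^2 := hMM2
                _ < |y' j'| := hj'
            · exfalso
              have hx'j : x' j' = 0 := by
                simp only [hx'def]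
                rw [dif_neg (by omega), if_neg (by omega)]
              have hrel : x' j' + x' j' = x' j' := by rw [hx'j]; ring
              have hzero : y' j' + y' j' = y' j' := hy2 _ _ _ hrel
              have : y' j' = 0 := by linarith
              rw [this] at hj'
              simp only [abs_zero] at hj'
              have : (0:ℤ) ≤ M^2 := by positivity
              linarith
        · refine ⟨?_, ?_, ?_⟩
          · rw [habs0]
            have hts : t + 1 - 1 = t := by omega
            rw [hts]
            have hsum : 2^(t-1) + 2^(t-1) = 2^t := by
              have h' : t - 1 + 1 = t := by omega
              have h2 : 2^(t-1) + 2^(t-1) = 2^(t-1) * 2 := by ring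
              rw [h2, ← pow_succ, h']
            have hsplit : (2:ℤ)^2^t = 2^2^(t-1) * 2^2^(t-1) := by
              rw [← pow_add, hsum]
            rw [hsplit, sq]
            exact mul_lt_mul'' hMt hMt (by positivity) (by positivity)
          · intro j
            rw [habs0]
            simp only [hx'def]
            split_ifs with h1 h2
            · calc |x ⟨(j:ℕ)-1, by omega⟩| ≤ M := hMx _
                _ ≤ M^2 := hMM2.le
            · rw [abs_of_nonneg (by positivity : (0:ℤ) ≤ M^2)]
            · simp
              positivity
          · rw [habs0]
            have hpe : (2:ℤ)^2^(t+1) = (2^2^t)^2 := by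
              rw [← pow_mul, pow_succ]
            rw [hpe]
            exact pow_le_pow_left₀ hMpos.le htspec 2
      · intro i j k hk
        apply hy2
        rw [hxe, hxe, hxe]
        exact hk
      · intro i j k hk
        apply hy3
        rw [hxe, hxe, hxe]
        exact hk
    · refine ⟨x, ?_, fun _ _ _ hh => hh, fun _ _ _ hh => hh⟩
      intro i hi hlti
      exfalso
      apply hbig
      have : i = ⟨0, hn⟩ := Fin.ext hi
      rwa [this] at hlti
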